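/- Let S : ℝ → ℂ satisfy S(x)·S(−x) = 1 for all x ∈ ℝ. Then for every n ∈ ℕ, all permutations σ, ρ of {1,…,n}, and all θ ∈ ℝⁿ, the composition law S^{σ∘ρ}(θ) = S^{σ}(θ) · S^{ρ}(θ^{σ}) holds, where (σ∘ρ)(i) = σ(ρ(i)). -/

import Mathlib

/-- The S-factor `S^σ(θ) = ∏_{i<j, σ(i)>σ(j)} S(θ_{σ(i)} − θ_{σ(j)})`. -/
noncomputable def Sperm (S : ℝ → ℂ) {n : ℕ} (σ : Equiv.Perm (Fin n)) (θ : Fin n → ℝ) : ℂ :=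
  ∏ p ∈ Finset.univ.filter (fun p : Fin n × Fin n => p.1 < p.2 ∧ σ p.2 < σ p.1),
    S (θ (σ p.1) - θ (σ p.2))

/-- Composition law `S^{σ∘ρ}(θ) = S^σ(θ) · S^ρ(θ^σ)`. -/
theorem sperm_composition (S : ℝ → ℂ) (hS : ∀ x : ℝ, S x * S (-x) = 1) (n : ℕ)
    (σ ρ : Equiv.Perm (Fin n)) (θ : Fin n → ℝ) :
    Sperm S (σ * ρ) θ = Sperm S σ θ * Sperm S ρ (fun i => θ (σ i)) := by
  classical
  set T : Finset (Fin n × Fin n) := Finset.univ.filter (fun p => p.1 < p.2) with hT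
  have key : ∀ (τ : Equiv.Perm (Fin n)) (η : Fin n → ℝ),
      Sperm S τ η = ∏ p ∈ T, (if τ p.2 < τ p.1 then S (η (τ p.1) - η (τ p.2)) else 1) := by
    intro τ η
    rw [Sperm, hT, ← Finset.prod_filter, Finset.filter_filter]
  set f : Fin n × Fin n → Fin n × Fin n :=
    fun p => if ρ p.1 < ρ p.2 then (ρ p.1, ρ p.2) else (ρ p.2, ρ p.1) with hf
  set g : Fin n × Fin n → Fin n × Fin n :=
    fun q => if ρ⁻¹ q.1 < ρ⁻¹ q.2 then (ρ⁻¹ q.1, ρ⁻¹ q.2) else (ρ⁻¹ q.2, ρ⁻¹ q.1) with hg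
  set F : Fin n × Fin n → ℂ :=
    fun q => if σ q.2 < σ q.1 then S (θ (σ q.1) - θ (σ q.2)) else 1 with hF
  have memT : ∀ p : Fin n × Fin n, p ∈ T ↔ p.1 < p.2 := by
    intro p; simp [hT]
  have hre : (∏ p ∈ T, F p) = ∏ p ∈ T, F (f p) := by
    refine (Finset.prod_nbij' f g ?_ ?_ ?_ ?_ ?_).symm
    · intro p hp
      have h12 : p.1 < p.2 := (memT p).mp hp
      have hne : ρ p.1 ≠ ρ p.2 := fun h => absurd (ρ.injective h) (ne_of_lt h12)
      rw [memT, hf]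
      rcases lt_or_gt_of_ne hne with h | h
      · simp [h]
      · simp [not_lt_of_gt h, h]
    · intro q hq
      have h12 : q.1 < q.2 := (memT q).mp hq
      have hne : ρ⁻¹ q.1 ≠ ρ⁻¹ q.2 := fun h => absurd (ρ⁻¹.injective h) (ne_of_lt h12)
      rw [memT, hg]
      rcases lt_or_gt_of_ne hne with h | h
      · rw [Equiv.Perm.inv_def] at h
        simp [h]
      · rw [Equiv.Perm.inv_def] at h
        simp [not_lt_of_gt h, h]
    · intro p hp
      have h12 : p.1 < p.2 := (memT p).mp hp
      have hne : ρ p.1 ≠ ρ p.2 := fun h => absurd (ρ.injective h) (ne_of_lt h12)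
      simp only [hf, hg]
      rcases lt_or_gt_of_ne hne with h | h
      · simp [h, Equiv.symm_apply_apply, h12]
      · simp [not_lt_of_gt h, Equiv.symm_apply_apply, not_lt_of_gt h12]
    · intro q hq
      have h12 : q.1 < q.2 := (memT q).mp hq
      have hne : ρ⁻¹ q.1 ≠ ρ⁻¹ q.2 := fun h => absurd (ρ⁻¹.injective h) (ne_of_lt h12)
      simp only [hf, hg]
      rcases lt_or_gt_of_ne hne with h | h
      · rw [Equiv.Perm.inv_def] at h
        simp [h, Equiv.apply_symm_apply, h12]
      · rw [Equiv.Perm.inv_def] at h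
        simp [not_lt_of_gt h, Equiv.apply_symm_apply, not_lt_of_gt h12]
    · intro p hp; rfl
  rw [key, key, key, hre, ← Finset.prod_mul_distrib]
  refine Finset.prod_congr rfl ?_
  intro p hp
  have h12 : p.1 < p.2 := (memT p).mp hp
  have hne : ρ p.1 ≠ ρ p.2 := fun h => absurd (ρ.injective h) (ne_of_lt h12)
  have hne' : σ (ρ p.1) ≠ σ (ρ p.2) := fun h => absurd (σ.injective h) hne
  rw [Equiv.Perm.mul_apply, Equiv.Perm.mul_apply]
  simp only [hF, hf, Equiv.Perm.mul_apply]
  rcases lt_or_gt_of_ne hne with h | h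
  · -- ρ p.1 < ρ p.2 : no ρ-inversion
    simp only [if_pos h, if_neg (not_lt_of_gt h)]
    ring
  · -- ρ p.2 < ρ p.1 : ρ-inversion
    simp only [if_neg (not_lt_of_gt h), if_pos h]
    rcases lt_or_gt_of_ne hne' with hs | hs
    · -- σρ p.1 < σρ p.2 : LHS = 1, RHS = S(-t)*S(t)
      rw [if_neg (not_lt_of_gt hs), if_pos hs]
      rw [show θ (σ (ρ p.2)) - θ (σ (ρ p.1)) = -(θ (σ (ρ p.1)) - θ (σ (ρ p.2))) by ring]
      rw [mul_comm, hS]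
    · rw [if_pos hs, if_neg (not_lt_of_gt hs), one_mul]
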